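/- Let H and K be real Hilbert spaces and T : H →L[ℝ] K a bounded linear operator with ‖T‖ ≤ 1. Let β > 0, w₀ ∈ H, and h₀ = (T*T)^{β/2} w₀, where the fractional power of T*T is defined via the continuous functional calculus. For λ > 0 define h_{*,0} = 0 and h_{*,t} = (T*T + λ·id)⁻¹ (T*T h₀ + λ h_{*,t−1}) for integers t ≥ 1. Then for every t ≥ 1, ‖h_{*,t} − h₀‖² ≤ ‖w₀‖² · λ^{min(β, 2t)}. -/

import Mathlib

open ContinuousLinearMap

open scoped RealInnerProductSpace

lemma tikhonov_scalar_bound {β lam : ℝ} (hβ : 0 < β) (hlam : 0 < lam) {t : ℕ} (ht : 1 ≤ t)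
    {x : ℝ} (hx0 : 0 ≤ x) (hx1 : x ≤ 1) :
    (lam / (x + lam)) ^ t * x ^ (β / 2) ≤ lam ^ (min β (2 * (t : ℝ)) / 2) := by
  set c : ℝ := min β (2 * (t : ℝ)) / 2 with hc
  have ht1 : (1 : ℝ) ≤ (t : ℝ) := by exact_mod_cast ht
  have hc0 : 0 < c := by
    have : (0:ℝ) < min β (2 * (t : ℝ)) := lt_min hβ (by linarith)
    positivity
  have hcβ : c ≤ β / 2 := by
    have := min_le_left β (2 * (t : ℝ)); rw [hc]; linarith
  have hct : c ≤ (t : ℝ) := by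
    have := min_le_right β (2 * (t : ℝ)); rw [hc]; linarith
  rcases eq_or_lt_of_le hx0 with h0 | hx
  · rw [← h0, Real.zero_rpow (by positivity), mul_zero]
    exact (Real.rpow_pos_of_pos hlam c).le
  · have hxl : 0 < x + lam := by linarith
    have hr0 : 0 < lam / (x + lam) := by positivity
    have hr1 : lam / (x + lam) ≤ 1 := by
      rw [div_le_one hxl]; linarith
    calc (lam / (x + lam)) ^ t * x ^ (β / 2)
        = (lam / (x + lam)) ^ (t : ℝ) * x ^ (β / 2) := by rw [Real.rpow_natCast]
      _ ≤ (lam / (x + lam)) ^ c * x ^ (β / 2) := by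
          exact mul_le_mul_of_nonneg_right
            (Real.rpow_le_rpow_of_exponent_ge hr0 hr1 hct)
            (Real.rpow_nonneg hx0 _)
      _ ≤ (lam / x) ^ c * x ^ c := by
          refine mul_le_mul ?_ ?_ (Real.rpow_nonneg hx0 _) (Real.rpow_nonneg (by positivity) _)
          · refine Real.rpow_le_rpow hr0.le ?_ hc0.le
            exact div_le_div_of_nonneg_left hlam.le hx (by linarith)
          · exact Real.rpow_le_rpow_of_exponent_ge hx hx1 hcβ
      _ = lam ^ c := by
          rw [← Real.mul_rpow (by positivity) hx0, div_mul_cancel₀ _ (ne_of_gt hx)]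

/-- Strong-metric iterated Tikhonov regularization bias bound under the β-source condition:
with `‖T‖ ≤ 1`, `h₀ = (T*T)^(β/2) w₀` (fractional power via the continuous functional
calculus), `h_{*,0} = 0` and `(T*T + λ·id) h_{*,t} = T*T h₀ + λ h_{*,t−1}` for `t ≥ 1`,
one has `‖h_{*,t} − h₀‖² ≤ ‖w₀‖² λ^(min β (2t))` for every `t ≥ 1`. -/
theorem iterated_tikhonov_bias_strong_metric
    {H K : Type*} [NormedAddCommGroup H] [InnerProductSpace ℝ H] [CompleteSpace H]
    [NormedAddCommGroup K] [InnerProductSpace ℝ K] [CompleteSpace K]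
    [ContinuousFunctionalCalculus ℝ (H →L[ℝ] H) (IsSelfAdjoint : (H →L[ℝ] H) → Prop)]
    (T : H →L[ℝ] K) (hT : ‖T‖ ≤ 1)
    (β : ℝ) (hβ : 0 < β) (w₀ h₀ : H)
    (hsource : h₀ = cfc (fun x : ℝ => x ^ (β / 2)) (adjoint T ∘L T) w₀)
    (lam : ℝ) (hlam : 0 < lam)
    (hs : ℕ → H) (h0 : hs 0 = 0)
    (hrec : ∀ t : ℕ, (adjoint T ∘L T + lam • ContinuousLinearMap.id ℝ H) (hs (t + 1))
      = (adjoint T ∘L T) h₀ + lam • hs t) :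
    ∀ t : ℕ, 1 ≤ t → ‖hs t - h₀‖ ^ 2 ≤ ‖w₀‖ ^ 2 * lam ^ min β (2 * (t : ℝ)) := by
  intro t ht
  rcases subsingleton_or_nontrivial H with hH | hH
  · have : hs t - h₀ = 0 := Subsingleton.elim _ _
    rw [this, norm_zero]
    have hpos : (0:ℝ) < lam ^ min β (2 * (t : ℝ)) := Real.rpow_pos_of_pos hlam _
    have := mul_nonneg (sq_nonneg ‖w₀‖) hpos.le
    norm_num
    nlinarith
  set A : H →L[ℝ] H := adjoint T ∘L T with hAdef
  -- A is a positive, selfadjoint operator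
  have hApos : A.IsPositive := by
    have := (isPositive_one (E := K)).adjoint_conj T
    simpa [hAdef, one_def] using this
  have hA : IsSelfAdjoint A := hApos.isSelfAdjoint
  -- spectrum of A is contained in [0, 1]
  have hspec : spectrum ℝ A ⊆ Set.Icc (0:ℝ) 1 := by
    intro x hx
    refine ⟨(SpectrumRestricts.nnreal_iff.mp hApos.spectrumRestricts) x hx, ?_⟩
    have h1 : |x| ≤ ‖A‖ := spectrum.norm_le_norm_of_mem hx
    have h2 : ‖A‖ ≤ 1 := by
      rw [hAdef, norm_adjoint_comp_self]
      calc ‖T‖ * ‖T‖ ≤ 1 * 1 := mul_le_mul hT hT (norm_nonneg _) (by norm_num)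
        _ = 1 := by norm_num
    calc x ≤ |x| := le_abs_self x
      _ ≤ 1 := h1.trans h2
  -- continuity facts
  have hrpc : Continuous (fun x : ℝ => x ^ (β / 2)) :=
    Real.continuous_rpow_const (by positivity)
  have hgc : ∀ n : ℕ,
      ContinuousOn (fun x : ℝ => (lam / (x + lam)) ^ n * x ^ (β / 2)) (spectrum ℝ A) := by
    intro n
    refine ContinuousOn.mul ?_ hrpc.continuousOn
    refine ContinuousOn.pow ?_ n
    refine ContinuousOn.div continuousOn_const
      ((continuous_id.add continuous_const).continuousOn) ?_
    intro x hx
    have := (hspec hx).1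
    positivity
  -- closed form for the iterates
  have key : ∀ n : ℕ,
      hs n - h₀ = -(cfc (fun x : ℝ => (lam / (x + lam)) ^ n * x ^ (β / 2)) A w₀) := by
    intro n
    induction n with
    | zero =>
      have hfun : (fun x : ℝ => (lam / (x + lam)) ^ 0 * x ^ (β / 2))
          = fun x : ℝ => x ^ (β / 2) := by
        funext x; rw [pow_zero, one_mul]
      rw [h0, hfun, zero_sub, hsource]
    | succ n ih =>
      set B : H →L[ℝ] H := A + lam • ContinuousLinearMap.id ℝ H with hBdef
      have hBinj : Function.Injective B := by
        have hker : ∀ v : H, B v = 0 → v = 0 := by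
          intro v hv
          have h1 : ⟪B v, v⟫ = 0 := by rw [hv, inner_zero_left]
          have h2 : ⟪B v, v⟫ = ⟪T v, T v⟫ + lam * ⟪v, v⟫ := by
            rw [hBdef]
            simp only [add_apply, smul_apply, id_apply, inner_add_left,
              real_inner_smul_left, hAdef, comp_apply]
            rw [← adjoint_inner_left]
          have h3 : (0:ℝ) ≤ ⟪T v, T v⟫ := real_inner_self_nonneg
          have h4 : lam * ⟪v, v⟫ ≤ 0 := by linarith [h1, h2.symm.trans h1]
          have h5 : ⟪v, v⟫ ≤ 0 := nonpos_of_mul_nonpos_right ?_ hlam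
          · have h6 : (0:ℝ) ≤ ⟪v, v⟫ := real_inner_self_nonneg
            have : ⟪v, v⟫ = 0 := le_antisymm h5 h6
            exact inner_self_eq_zero.mp this
          · rw [h2] at h1; linarith
        intro u v huv
        have : B (u - v) = 0 := by rw [map_sub, huv, sub_self]
        exact sub_eq_zero.mp (hker _ this)
      have hBone : B = A + lam • (1 : H →L[ℝ] H) := by
        rw [hBdef, ContinuousLinearMap.one_def]
      have hBcfc : B = cfc (fun x : ℝ => x + lam) A := by
        rw [cfc_add_const lam (fun x : ℝ => x) A (continuousOn_id) hA, cfc_id' ℝ A hA,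
          Algebra.algebraMap_eq_smul_one, hBone]
      apply hBinj
      have hL : B (hs (n + 1) - h₀) = lam • (hs n - h₀) := by
        rw [map_sub, hrec n, hBdef]
        simp only [add_apply, smul_apply, id_apply, smul_sub]
        abel
      rw [hL]
      have hR : B (-(cfc (fun x : ℝ => (lam / (x + lam)) ^ (n + 1) * x ^ (β / 2)) A w₀))
          = lam • (hs n - h₀) := by
        rw [map_neg]
        have hmul : B ((cfc (fun x : ℝ => (lam / (x + lam)) ^ (n + 1) * x ^ (β / 2)) A) w₀)
            = cfc (fun x : ℝ => (x + lam) * ((lam / (x + lam)) ^ (n + 1) * x ^ (β / 2))) A w₀ := by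
          rw [cfc_mul (fun x : ℝ => x + lam) _ A
            ((continuous_id.add continuous_const).continuousOn) (hgc (n + 1)),
            ← hBcfc, mul_apply_eq_comp]
        rw [hmul]
        have hcongr : cfc (fun x : ℝ => (x + lam) * ((lam / (x + lam)) ^ (n + 1) * x ^ (β / 2))) A
            = cfc (fun x : ℝ => lam * ((lam / (x + lam)) ^ n * x ^ (β / 2))) A := by
          apply cfc_congr
          intro x hx
          have hx0 : (0:ℝ) ≤ x := (hspec hx).1
          have hxl : x + lam ≠ 0 := by positivity
          have e : (x + lam) * (lam / (x + lam)) = lam := mul_div_cancel₀ lam hxl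
          simp only [pow_succ]
          linear_combination (lam / (x + lam)) ^ n * x ^ (β / 2) * e
        rw [hcongr, cfc_const_mul lam _ A (hgc n), smul_apply, ih, smul_neg]
      rw [hR]
  -- the quantitative bound
  rw [key t, norm_neg]
  set f : ℝ → ℝ := fun x => (lam / (x + lam)) ^ t * x ^ (β / 2) with hfdef
  set Bf : H →L[ℝ] H := cfc f A with hBfdef
  have hBfsa : IsSelfAdjoint Bf := cfc_predicate f A
  set M : ℝ := lam ^ (min β (2 * (t : ℝ)) / 2) with hMdef
  have hM : 0 < M := Real.rpow_pos_of_pos hlam _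
  have hfM : ∀ x ∈ spectrum ℝ A, f x * f x ≤ M ^ 2 := by
    intro x hx
    obtain ⟨hx0, hx1⟩ := hspec hx
    have hb := tikhonov_scalar_bound hβ hlam ht hx0 hx1
    have hf0 : 0 ≤ f x := by
      have : (0:ℝ) ≤ lam / (x + lam) := by positivity
      exact mul_nonneg (pow_nonneg this t) (Real.rpow_nonneg hx0 _)
    calc f x * f x ≤ M * M := mul_self_le_mul_self hf0 hb
      _ = M ^ 2 := (sq M).symm
  -- positivity of cfc of nonneg functions, via square roots
  have hpos : ∀ q : ℝ → ℝ, ContinuousOn q (spectrum ℝ A) → (∀ x ∈ spectrum ℝ A, 0 ≤ q x) →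
      ∀ v : H, 0 ≤ ⟪(cfc q A) v, v⟫ := by
    intro q hq hq0 v
    have hsqrtc : ContinuousOn (fun x => Real.sqrt (q x)) (spectrum ℝ A) :=
      Real.continuous_sqrt.comp_continuousOn hq
    have h1 : cfc q A = cfc (fun x => Real.sqrt (q x) * Real.sqrt (q x)) A :=
      cfc_congr fun x hx => (Real.mul_self_sqrt (hq0 x hx)).symm
    rw [h1, cfc_mul _ _ A hsqrtc hsqrtc, mul_apply_eq_comp]
    set C : H →L[ℝ] H := cfc (fun x => Real.sqrt (q x)) A with hCdef
    have hC : IsSelfAdjoint C := cfc_predicate _ A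
    have h2 : ⟪C (C v), v⟫ = ⟪C v, C v⟫ := by
      have h3 := adjoint_inner_left C v (C v)
      rwa [hC.adjoint_eq] at h3
    rw [h2]
    exact real_inner_self_nonneg
  have hq := hpos (fun x => M ^ 2 - f x * f x)
    (continuousOn_const.sub ((hgc t).mul (hgc t)))
    (fun x hx => sub_nonneg.mpr (hfM x hx)) w₀
  have hexp : cfc (fun x => M ^ 2 - f x * f x) A
      = algebraMap ℝ (H →L[ℝ] H) (M ^ 2) - Bf * Bf := by
    have h1 : cfc (fun x : ℝ => M ^ 2 - f x * f x) A
        = cfc (fun _ : ℝ => M ^ 2) A - cfc (fun x => f x * f x) A :=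
      cfc_sub (fun _ : ℝ => M ^ 2) (fun x => f x * f x) A
        continuousOn_const ((hgc t).mul (hgc t))
    rw [h1, cfc_const (M ^ 2) A hA, cfc_mul _ _ A (hgc t) (hgc t)]
  have hBB : ⟪(Bf * Bf) w₀, w₀⟫ = ‖Bf w₀‖ ^ 2 := by
    rw [mul_apply_eq_comp]
    have h2 : ⟪Bf (Bf w₀), w₀⟫ = ⟪Bf w₀, Bf w₀⟫ := by
      have h3 := adjoint_inner_left Bf w₀ (Bf w₀)
      rwa [hBfsa.adjoint_eq] at h3
    rw [h2, real_inner_self_eq_norm_sq]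
  have hkey2 : ⟪(cfc (fun x => M ^ 2 - f x * f x) A) w₀, w₀⟫
      = M ^ 2 * ‖w₀‖ ^ 2 - ‖Bf w₀‖ ^ 2 := by
    rw [hexp, sub_apply, inner_sub_left, hBB,
      Algebra.algebraMap_eq_smul_one, smul_apply, one_apply_eq_self, real_inner_smul_left,
      real_inner_self_eq_norm_sq]
  rw [hkey2] at hq
  have hM2 : M ^ 2 = lam ^ min β (2 * (t : ℝ)) := by
    rw [hMdef, sq, ← Real.rpow_add hlam]
    congr 1
    ring
  rw [hM2] at hq
  linarith [hq, mul_comm (‖w₀‖ ^ 2) (lam ^ min β (2 * (t : ℝ)))]
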